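/- Every element of the minimal Martin space ℳᵐ is harmonic, i.e. every w ∈ ℳᵐ satisfies w_i = sup_{j ∈ S} (A_{ij} + w_j) for all i ∈ S. -/

import Mathlib

open Filter Topology

noncomputable section

namespace MaxPlus

variable {S : Type*}

/-- Weight of the path `p 0, p 1, ..., p n` for the kernel `A`. -/
def pathWeight (A : S → S → EReal) (p : ℕ → S) (n : ℕ) : EReal :=
  ∑ k ∈ Finset.range n, A (p k) (p (k + 1))

/-- The max-plus star kernel `A*`: supremum of weights of paths of length `≥ 0`. -/
def star (A : S → S → EReal) (i j : S) : EReal :=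
  ⨆ (n : ℕ) (p : ℕ → S) (_ : p 0 = i ∧ p n = j), pathWeight A p n

/-- The max-plus kernel `A⁺`: supremum of weights of paths of length `≥ 1`. -/
def plus (A : S → S → EReal) (i j : S) : EReal :=
  ⨆ (n : ℕ) (_ : 1 ≤ n) (p : ℕ → S) (_ : p 0 = i ∧ p n = j), pathWeight A p n

/-- `π` is a left super-harmonic row vector (with full support, being real valued). -/
def LeftSuperharmonic (A : S → S → EReal) (π : S → ℝ) : Prop :=
  ∀ j, (⨆ i, ((π i : EReal) + A i j)) ≤ (π j : EReal)

/-- The Martin kernel `K_{ij} = A*_{ij} - π_j`. -/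
def K (A : S → S → EReal) (π : S → ℝ) (i j : S) : EReal :=
  star A i j - (π j : EReal)

/-- `K♭_{ij} = A⁺_{ij} - π_j`. -/
def Kflat (A : S → S → EReal) (π : S → ℝ) (i j : S) : EReal :=
  plus A i j - (π j : EReal)

/-- The set `𝒦` of columns of the Martin kernel. -/
def kerCols (A : S → S → EReal) (π : S → ℝ) : Set (S → EReal) :=
  Set.range fun j => fun i => K A π i j

/-- The Martin space `ℳ`: closure of `𝒦` in the product topology. -/
def martin (A : S → S → EReal) (π : S → ℝ) : Set (S → EReal) :=
  closure (kerCols A π)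

/-- `μ_u(w)`: the limsup of `π_j + u_j` as `K_{·j} → w`. -/
def mu (A : S → S → EReal) (π : S → ℝ) (u : S → EReal) (w : S → EReal) : EReal :=
  ⨅ (W : Set (S → EReal)) (_ : W ∈ 𝓝 w),
    ⨆ (j : S) (_ : (fun i => K A π i j) ∈ W), ((π j : EReal) + u j)

/-- `w♭_i`: the liminf of `K♭_{ij}` as `K_{·j} → w`. -/
def flat (A : S → S → EReal) (π : S → ℝ) (w : S → EReal) (i : S) : EReal :=
  ⨆ (W : Set (S → EReal)) (_ : W ∈ 𝓝 w),
    ⨅ (j : S) (_ : (fun i' => K A π i' j) ∈ W), Kflat A π i j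

/-- The kernel `H(z,w) = μ_w(z)`. -/
def H (A : S → S → EReal) (π : S → ℝ) (z w : S → EReal) : EReal := mu A π w z

/-- The kernel `H♭(z,w) = μ_{w♭}(z)`. -/
def Hflat (A : S → S → EReal) (π : S → ℝ) (z w : S → EReal) : EReal :=
  mu A π (flat A π w) z

/-- The minimal Martin space `ℳᵐ = {w ∈ ℳ : H♭(w,w) = 0}`. -/
def martinMin (A : S → S → EReal) (π : S → ℝ) : Set (S → EReal) :=
  {w | w ∈ martin A π ∧ Hflat A π w w = 0}

/-- The maximal circuit mean `ρ(A)`. -/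
def maxCircuitMean (A : S → S → EReal) : EReal :=
  ⨆ (k : ℕ) (_ : 1 ≤ k) (p : ℕ → S) (_ : p k = p 0),
    (((k : ℝ)⁻¹ : ℝ) : EReal) * pathWeight A p k

/-- `α`-almost-geodesic with respect to the left super-harmonic vector `π`. -/
def IsAlmostGeodesic (A : S → S → EReal) (π : S → ℝ) (x : ℕ → S) : Prop :=
  ∃ α : ℝ, 0 ≤ α ∧ ∀ k : ℕ,
    (π (x k) : EReal) ≤ (α : EReal) + (π (x 0) : EReal) + pathWeight A x k

/-- The set `𝒮` of `π`-integrable super-harmonic vectors. -/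
def Sset (A : S → S → EReal) (π : S → ℝ) : Set (S → EReal) :=
  {u | (∀ i, u i ≠ ⊤) ∧ (∀ i, (⨆ j, A i j + u j) ≤ u i) ∧
    (⨆ j, ((π j : EReal) + u j)) < ⊤}

/-- The set `ℋ` of `π`-integrable harmonic vectors. -/
def Hset (A : S → S → EReal) (π : S → ℝ) : Set (S → EReal) :=
  {u | (∀ i, u i ≠ ⊤) ∧ (∀ i, (⨆ j, A i j + u j) = u i) ∧
    (⨆ j, ((π j : EReal) + u j)) < ⊤}

/-- A vector is normalised if `sup_j (π_j + u_j) = 0`. -/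
def Normalised (π : S → ℝ) (u : S → EReal) : Prop :=
  (⨆ j, ((π j : EReal) + u j)) = 0

/-- `ξ` is an extremal generator of `V`. -/
def ExtremalGen (V : Set (S → EReal)) (ξ : S → EReal) : Prop :=
  ξ ∈ V ∧ ξ ≠ (fun _ => (⊥ : EReal)) ∧
    ∀ u v, u ∈ V → v ∈ V → ξ = (fun i => u i ⊔ v i) → ξ = u ∨ ξ = v

end MaxPlus
namespace MaxPlus

-- auxiliary lemmas to insert
section Aux

variable {S : Type*} {A : S → S → EReal} {π : S → ℝ}

lemma pathWeight_succ (A : S → S → EReal) (p : ℕ → S) (n : ℕ) :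
    pathWeight A p (n + 1) = pathWeight A p n + A (p n) (p (n + 1)) :=
  Finset.sum_range_succ _ n

lemma pathWeight_succ' (A : S → S → EReal) (p : ℕ → S) (n : ℕ) :
    pathWeight A p (n + 1) = A (p 0) (p 1) + pathWeight A (fun k => p (k + 1)) n := by
  simp only [pathWeight]
  rw [Finset.sum_range_succ', add_comm]

lemma pathWeight_le_star {i j : S} (p : ℕ → S) (n : ℕ) (h0 : p 0 = i) (hn : p n = j) :
    pathWeight A p n ≤ star A i j :=
  le_iSup_of_le n <| le_iSup_of_le p <| le_iSup_of_le ⟨h0, hn⟩ le_rfl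

lemma plus_le_star (i j : S) : plus A i j ≤ star A i j :=
  iSup_le fun n => iSup_le fun _ => iSup_le fun p => iSup_le fun hp =>
    pathWeight_le_star p n hp.1 hp.2

lemma iSup_add_le {ι : Sort*} {f : ι → EReal} {c b : EReal} (h : ∀ x, f x + c ≤ b) :
    (⨆ x, f x) + c ≤ b := by
  by_cases hf : ∀ x, f x = ⊥
  · simp [iSup_eq_bot.2 hf]
  · push_neg at hf
    obtain ⟨x₀, hx₀⟩ := hf
    induction c with
    | bot => simp
    | coe c =>
      have h1 : (⨆ x, f x) ≤ b - (c : EReal) :=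
        iSup_le fun x => (EReal.le_sub_iff_add_le (.inl (EReal.coe_ne_bot c))
          (.inl (EReal.coe_ne_top c))).2 (h x)
      exact (EReal.le_sub_iff_add_le (.inl (EReal.coe_ne_bot c))
        (.inl (EReal.coe_ne_top c))).1 h1
    | top =>
      have hb : b = ⊤ := top_le_iff.1 <| (EReal.add_top_of_ne_bot hx₀) ▸ h x₀
      simp [hb]

lemma superharm_path {u : S → EReal} (hu : ∀ i k, A i k + u k ≤ u i) (p : ℕ → S) :
    ∀ n, pathWeight A p n + u (p n) ≤ u (p 0) := by
  intro n
  induction n with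
  | zero => simp [pathWeight]
  | succ n ih =>
    rw [pathWeight_succ, add_assoc]
    exact le_trans (add_le_add_right (hu _ _) _) ih

lemma superharm_star {u : S → EReal} (hu : ∀ i k, A i k + u k ≤ u i) (i j : S) :
    star A i j + u j ≤ u i := by
  refine iSup_add_le fun n => iSup_add_le fun p => iSup_add_le fun hp => ?_
  obtain ⟨h0, hn⟩ := hp
  subst h0; subst hn
  exact superharm_path hu p n

lemma pi_step (hπ : LeftSuperharmonic A π) (i j : S) :
    (π i : EReal) + A i j ≤ (π j : EReal) :=
  le_trans (le_iSup (fun i => (π i : EReal) + A i j) i) (hπ j)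

lemma pi_path (hπ : LeftSuperharmonic A π) (p : ℕ → S) :
    ∀ n, (π (p 0) : EReal) + pathWeight A p n ≤ (π (p n) : EReal) := by
  intro n
  induction n with
  | zero => simp [pathWeight]
  | succ n ih =>
    rw [pathWeight_succ, ← add_assoc]
    exact le_trans (add_le_add_left ih _) (pi_step hπ _ _)

lemma star_le_pi (hπ : LeftSuperharmonic A π) (i j : S) :
    star A i j ≤ ((π j - π i : ℝ) : EReal) := by
  refine iSup_le fun n => iSup_le fun p => iSup_le fun hp => ?_
  obtain ⟨h0, hn⟩ := hp
  subst h0; subst hn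
  rw [EReal.coe_sub]
  exact (EReal.le_sub_iff_add_le (.inl (EReal.coe_ne_bot _))
    (.inl (EReal.coe_ne_top _))).2 (by rw [add_comm]; exact pi_path hπ p n)

lemma K_le (hπ : LeftSuperharmonic A π) (i j : S) : K A π i j ≤ ((-π i : ℝ) : EReal) := by
  calc star A i j - (π j : EReal) ≤ ((π j - π i : ℝ) : EReal) - ((π j : ℝ) : EReal) :=
        EReal.sub_le_sub (star_le_pi hπ i j) le_rfl
    _ = ((-π i : ℝ) : EReal) := by rw [← EReal.coe_sub]; norm_num

lemma Kflat_le_K (i j : S) : Kflat A π i j ≤ K A π i j :=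
  EReal.sub_le_sub (plus_le_star i j) le_rfl

lemma plus_le_step (i j : S) : plus A i j ≤ ⨆ k, A i k + star A k j := by
  refine iSup_le fun n => iSup_le fun hn => iSup_le fun p => iSup_le fun hp => ?_
  obtain ⟨h0, hn'⟩ := hp
  obtain ⟨m, rfl⟩ : ∃ m, n = m + 1 := ⟨n - 1, (Nat.succ_pred_eq_of_pos hn).symm⟩
  rw [pathWeight_succ', h0]
  exact le_iSup_of_le (p 1) (add_le_add_right (pathWeight_le_star _ m rfl hn') _)

lemma step_le_plus (i k j : S) : A i k + star A k j ≤ plus A i j := by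
  rw [add_comm]
  refine iSup_add_le fun m => iSup_add_le fun q => iSup_add_le fun hq => ?_
  obtain ⟨hq0, hqm⟩ := hq
  have hpw : pathWeight A (fun t => Nat.casesOn t i q : ℕ → S) (m + 1)
      = A i (q 0) + pathWeight A q m := pathWeight_succ' A _ m
  rw [hq0] at hpw
  rw [add_comm, ← hpw]
  exact le_iSup_of_le (m + 1) <| le_iSup_of_le (Nat.succ_le_succ (Nat.zero_le m)) <|
    le_iSup_of_le (fun t => Nat.casesOn t i q) <| le_iSup_of_le ⟨rfl, hqm⟩ le_rfl

lemma step_K_le (i k j : S) : A i k + K A π k j ≤ K A π i j := by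
  rw [K, K, sub_eq_add_neg, sub_eq_add_neg, ← add_assoc]
  exact add_le_add_left (le_trans (step_le_plus i k j) (plus_le_star i j)) _

end Aux

/-- every element of the minimal Martin space `ℳᵐ` is harmonic. -/
theorem harmonic_of_mem_martinMin {S : Type*} (A : S → S → EReal)
    (hA : ∀ i j, A i j ≠ ⊤) (π : S → ℝ) (hπ : LeftSuperharmonic A π)
    (w : S → EReal) (hw : w ∈ martinMin A π) :
    ∀ i, w i = ⨆ j, A i j + w j := by
  obtain ⟨hwM, hw0⟩ := hw
  have hmem : ∀ U ∈ 𝓝 w, ∃ j : S, (fun i => K A π i j) ∈ U := by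
    intro U hU
    obtain ⟨z, hz1, hz2⟩ := mem_closure_iff_nhds.1 hwM U hU
    obtain ⟨j, rfl⟩ := hz2
    exact ⟨j, hz1⟩
  -- w ≤ -π pointwise
  have hwle : ∀ i, w i ≤ ((-π i : ℝ) : EReal) := by
    intro i
    by_contra h
    push_neg at h
    have hU : {z : S → EReal | ((-π i : ℝ) : EReal) < z i} ∈ 𝓝 w :=
      (isOpen_lt continuous_const (continuous_apply i)).mem_nhds h
    obtain ⟨j, hj⟩ := hmem _ hU
    exact absurd (K_le hπ i j) (not_le.2 hj)
  -- w is superharmonic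
  have hwsh : ∀ i k, A i k + w k ≤ w i := by
    intro i k
    by_contra h
    push_neg at h
    have hAk : A i k ≠ ⊥ := by
      intro hb
      rw [hb, EReal.bot_add] at h
      exact absurd h (by simp)
    obtain ⟨a, ha⟩ : ∃ a : ℝ, A i k = (a : EReal) :=
      ⟨(A i k).toReal, (EReal.coe_toReal (hA i k) hAk).symm⟩
    obtain ⟨c, hc1, hc2⟩ := EReal.exists_between_coe_real h
    rw [ha] at hc2
    have hc3 : (c : EReal) - (a : EReal) < w k :=
      EReal.sub_lt_of_lt_add (by rwa [add_comm] at hc2)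
    have hUn : ({z : S → EReal | z i < (c : EReal)} ∩
        {z : S → EReal | (c : EReal) - (a : EReal) < z k}) ∈ 𝓝 w :=
      Filter.inter_mem
        ((isOpen_lt (continuous_apply i) continuous_const).mem_nhds hc1)
        ((isOpen_lt continuous_const (continuous_apply k)).mem_nhds hc3)
    obtain ⟨j, hj1, hj2⟩ := hmem _ hUn
    have hstep := step_K_le (A := A) (π := π) i k j
    rw [ha] at hstep
    have hlt2 : (c : EReal) < K A π k j + (a : EReal) :=
      (EReal.sub_lt_iff (.inl (EReal.coe_ne_bot a)) (.inl (EReal.coe_ne_top a))).1 hj2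
    rw [add_comm] at hlt2
    exact absurd (lt_trans (lt_of_lt_of_le hlt2 hstep) hj1) (lt_irrefl _)
  -- flat ≤ w pointwise
  have hflat_le : ∀ i, flat A π w i ≤ w i := by
    intro i
    refine iSup_le fun U => iSup_le fun hU => ?_
    by_contra h
    push_neg at h
    obtain ⟨c, hc1, hc2⟩ := EReal.exists_between_coe_real h
    have hU' : (U ∩ {z : S → EReal | z i < (c : EReal)}) ∈ 𝓝 w :=
      Filter.inter_mem hU
        ((isOpen_lt (continuous_apply i) continuous_const).mem_nhds hc1)
    obtain ⟨j, hjU, hjc⟩ := hmem _ hU'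
    have h1 : (⨅ (j' : S) (_ : (fun i' => K A π i' j') ∈ U), Kflat A π i j')
        ≤ Kflat A π i j := iInf₂_le j hjU
    exact absurd hc2 (not_lt.2 (le_trans h1 ((Kflat_le_K i j).trans (le_of_lt hjc))))
  -- from H♭(w,w) = 0: in every neighbourhood, points with π + flat w nearly ≥ 0
  have hsup : ∀ U ∈ 𝓝 w, ∀ ε : ℝ, 0 < ε → ∃ j : S,
      (fun i => K A π i j) ∈ U ∧ ((-ε : ℝ) : EReal) < (π j : EReal) + flat A π w j := by
    intro U hU ε hε
    have h1 : Hflat A π w w ≤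
        ⨆ (j : S) (_ : (fun i => K A π i j) ∈ U), ((π j : EReal) + flat A π w j) := by
      unfold Hflat mu
      exact iInf₂_le U hU
    rw [hw0] at h1
    have hlt : ((-ε : ℝ) : EReal) <
        ⨆ (j : S) (_ : (fun i => K A π i j) ∈ U), ((π j : EReal) + flat A π w j) :=
      lt_of_lt_of_le (by exact_mod_cast neg_lt_zero.2 hε) h1
    obtain ⟨j, hj⟩ := lt_iSup_iff.1 hlt
    obtain ⟨hjU, hjv⟩ := lt_iSup_iff.1 hj
    exact ⟨j, hjU, hjv⟩
  -- the vector u = A w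
  set u : S → EReal := fun k => ⨆ j, A k j + w j with hu_def
  have hu_le_w : ∀ k, u k ≤ w k := fun k => iSup_le fun j => hwsh k j
  have hu_sh : ∀ a k, A a k + u k ≤ u a := fun a k =>
    le_trans (add_le_add_right (hu_le_w k) _) (le_iSup (fun j => A a j + w j) k)
  have hw_star : ∀ a b, star A a b + w b ≤ w a := superharm_star hwsh
  have hu_star : ∀ a b, star A a b + u b ≤ u a := superharm_star hu_sh
  -- the μ estimate: u is "nearly normalized" near w
  have hmu : ∀ U ∈ 𝓝 w, ∀ ε : ℝ, 0 < ε → ∃ j : S, (fun i => K A π i j) ∈ U ∧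
      ((-(2 * ε) - π j : ℝ) : EReal) ≤ u j := by
    intro U hU ε hε
    obtain ⟨j, hjU, hj⟩ := hsup U hU ε hε
    have hflatj : ((-ε - π j : ℝ) : EReal) < flat A π w j := by
      rw [EReal.coe_sub]
      exact (EReal.sub_lt_iff (.inl (EReal.coe_ne_bot _)) (.inl (EReal.coe_ne_top _))).2
        (by rwa [add_comm] at hj)
    rw [flat] at hflatj
    obtain ⟨U', hU'⟩ := lt_iSup_iff.1 hflatj
    obtain ⟨hU'n, hinf⟩ := lt_iSup_iff.1 hU'
    obtain ⟨j', hj'U, hj'⟩ := hsup U' hU'n ε hε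
    have hKf : ((-ε - π j : ℝ) : EReal) < Kflat A π j j' :=
      lt_of_lt_of_le hinf (iInf₂_le j' hj'U)
    have hKfK : Kflat A π j j' ≤ ((-π j : ℝ) : EReal) :=
      (Kflat_le_K j j').trans (K_le hπ j j')
    obtain ⟨b, hb⟩ : ∃ b : ℝ, Kflat A π j j' = (b : EReal) :=
      ⟨_, (EReal.coe_toReal (lt_of_le_of_lt hKfK (EReal.coe_lt_top _)).ne
        (lt_of_le_of_lt bot_le hKf).ne').symm⟩
    have hwj'1 : ((-ε - π j' : ℝ) : EReal) < w j' := by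
      refine lt_of_lt_of_le ?_ (hflat_le j')
      rw [EReal.coe_sub]
      exact (EReal.sub_lt_iff (.inl (EReal.coe_ne_bot _)) (.inl (EReal.coe_ne_top _))).2
        (by rwa [add_comm] at hj')
    obtain ⟨v, hv⟩ : ∃ v : ℝ, w j' = (v : EReal) :=
      ⟨_, (EReal.coe_toReal (lt_of_le_of_lt (hwle j') (EReal.coe_lt_top _)).ne
        (lt_of_le_of_lt bot_le hwj'1).ne').symm⟩
    have hplus : plus A j j' = (b : EReal) + ((π j' : ℝ) : EReal) := by
      rw [← hb]
      exact EReal.sub_add_cancel.symm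
    have h1 : ∀ k, (A j k + star A k j') + w j' ≤ u j := by
      intro k
      rw [add_assoc]
      exact le_trans (add_le_add_right (hw_star k j') _) (le_iSup (fun m => A j m + w m) k)
    have h2 : (⨆ k, A j k + star A k j') + w j' ≤ u j := iSup_add_le h1
    have h3 : plus A j j' + w j' ≤ u j :=
      le_trans (add_le_add_left (plus_le_step j j') _) h2
    rw [hplus, hv] at h3
    have h4 : ((b + π j' + v : ℝ) : EReal) ≤ u j := by exact_mod_cast h3
    have hb' : -ε - π j < b := by rw [hb] at hKf; exact_mod_cast hKf
    have hv' : -ε - π j' < v := by rw [hv] at hwj'1; exact_mod_cast hwj'1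
    refine ⟨j, hjU, le_trans ?_ h4⟩
    exact_mod_cast (show -(2 * ε) - π j ≤ b + π j' + v by linarith)
  -- conclusion
  intro i
  refine le_antisymm ?_ (iSup_le fun j => hwsh i j)
  rcases eq_or_ne (w i) ⊥ with hbot | hbot
  · rw [hbot]; exact bot_le
  obtain ⟨wi, hwi⟩ : ∃ r : ℝ, w i = (r : EReal) :=
    ⟨_, (EReal.coe_toReal (lt_of_le_of_lt (hwle i) (EReal.coe_lt_top _)).ne hbot).symm⟩
  have key : ∀ ε : ℝ, 0 < ε → ((wi - 3 * ε : ℝ) : EReal) ≤ u i := by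
    intro ε hε
    have hUn : {z : S → EReal | ((wi - ε : ℝ) : EReal) < z i} ∈ 𝓝 w :=
      (isOpen_lt continuous_const (continuous_apply i)).mem_nhds
        (by rw [Set.mem_setOf_eq, hwi]; exact_mod_cast sub_lt_self wi hε)
    obtain ⟨j, hjU, hjbound⟩ := hmu _ hUn ε hε
    have hK1 : ((wi - ε : ℝ) : EReal) < K A π i j := hjU
    obtain ⟨kk, hkk⟩ : ∃ r : ℝ, K A π i j = (r : EReal) :=
      ⟨_, (EReal.coe_toReal (lt_of_le_of_lt (K_le hπ i j) (EReal.coe_lt_top _)).ne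
        (lt_of_le_of_lt bot_le hK1).ne').symm⟩
    have hstar : star A i j = (kk : EReal) + ((π j : ℝ) : EReal) := by
      rw [← hkk]
      exact EReal.sub_add_cancel.symm
    have h5 : ((kk : ℝ) : EReal) + ((π j : ℝ) : EReal) + ((-(2 * ε) - π j : ℝ) : EReal)
        ≤ star A i j + u j := by
      rw [← hstar]
      exact add_le_add_right hjbound _
    have h6 : ((kk - 2 * ε : ℝ) : EReal) ≤ u i := by
      refine le_trans ?_ (le_trans h5 (hu_star i j))
      rw [← EReal.coe_add, ← EReal.coe_add]
      exact EReal.coe_le_coe_iff.2 (by linarith)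
    have hkk' : wi - ε < kk := by rw [hkk] at hK1; exact_mod_cast hK1
    exact le_trans (by exact_mod_cast (show wi - 3 * ε ≤ kk - 2 * ε by linarith)) h6
  have hfin : ((wi : ℝ) : EReal) ≤ u i := by
    by_contra hcon
    push_neg at hcon
    have h1 := key 1 one_pos
    have hne : u i ≠ ⊥ := fun hb => by
      rw [hb] at h1
      exact EReal.coe_ne_bot _ (le_bot_iff.1 h1)
    obtain ⟨ui, hui⟩ : ∃ r : ℝ, u i = (r : EReal) :=
      ⟨_, (EReal.coe_toReal (hcon.trans (EReal.coe_lt_top wi)).ne hne).symm⟩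
    rw [hui] at hcon
    have hui_lt : ui < wi := by exact_mod_cast hcon
    have h2 := key ((wi - ui) / 4) (by linarith)
    rw [hui] at h2
    have h3 : wi - 3 * ((wi - ui) / 4) ≤ ui := by exact_mod_cast h2
    linarith
  rw [hwi]
  exact hfin

end MaxPlus
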